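/- Let $f : V \to \mathbb{Z}$ be a locally constant function with bounded support on a finite-dimensional $\mathbb{Q}$-vector space $V$ with lattice $L$, and suppose $f$ is periodic with respect to full-rank sublattices $M \subseteq M'$ of $V$. Then $\frac{1}{[L:M]}\sum_{v \in V/M} f(v) = \frac{1}{[L:M']}\sum_{v \in V/M'} f(v)$; i.e. the Haar functional $h_V(f)$ is well-defined independently of the choice of period lattice. -/

import Mathlib

open Function

variable {V : Type*} [AddCommGroup V] [Module ℚ V]

/-- A full-rank lattice in a `ℚ`-vector space. -/
def IsFullLattice (M : AddSubgroup V) : Prop :=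
  M.FG ∧ Submodule.span ℚ (M : Set V) = ⊤

/-- The generalized index `[L : M] ∈ ℚ` of commensurable subgroups,
`[L : L ∩ M] / [M : L ∩ M]`. -/
noncomputable def genIndex (L M : AddSubgroup V) : ℚ :=
  (((L ⊓ M).addSubgroupOf L).index : ℚ) / (((L ⊓ M).addSubgroupOf M).index : ℚ)

lemma IsFullLattice.exists_nsmul_mem {M : AddSubgroup V} (hM : IsFullLattice M) (v : V) :
    ∃ n : ℕ, 0 < n ∧ (n : ℚ) • v ∈ M := by
  have hv : v ∈ Submodule.span ℚ (M : Set V) := hM.2 ▸ Submodule.mem_top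
  induction hv using Submodule.span_induction with
  | mem x hx => exact ⟨1, one_pos, by simpa using hx⟩
  | zero => exact ⟨1, one_pos, by simpa using M.zero_mem⟩
  | add x y _ _ hx hy =>
      obtain ⟨m, hm, hmx⟩ := hx
      obtain ⟨k, hk, hky⟩ := hy
      refine ⟨m * k, Nat.mul_pos hm hk, ?_⟩
      have h1 : ((m * k : ℕ) : ℚ) • (x + y) = k • ((m : ℚ) • x) + m • ((k : ℚ) • y) := by
        rw [← Nat.cast_smul_eq_nsmul ℚ k, ← Nat.cast_smul_eq_nsmul ℚ m]
        push_cast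
        module
      rw [h1]
      exact M.add_mem (AddSubgroup.nsmul_mem M hmx k) (AddSubgroup.nsmul_mem M hky m)
  | smul q x _ hx =>
      obtain ⟨m, hm, hmx⟩ := hx
      refine ⟨m * q.den, Nat.mul_pos hm q.pos, ?_⟩
      have h1 : ((m * q.den : ℕ) : ℚ) • (q • x) = q.num • ((m : ℚ) • x) := by
        rw [← Int.cast_smul_eq_zsmul ℚ]
        push_cast
        rw [smul_smul, smul_smul, mul_assoc, Rat.den_mul_eq_num, mul_comm]
      rw [h1]
      exact AddSubgroup.zsmul_mem M hmx q.num

lemma relIndex_ne_zero_of_full {A B : AddSubgroup V} (hA : IsFullLattice A) (hB : B.FG) :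
    A.relIndex B ≠ 0 := by
  have hfgB : AddGroup.FG B := (AddGroup.fg_iff_addSubgroup_fg B).mpr hB
  have htor : AddMonoid.IsTorsion (B ⧸ A.addSubgroupOf B) := by
    intro x
    induction x using QuotientAddGroup.induction_on with
    | H b =>
      obtain ⟨n, hn, hmem⟩ := hA.exists_nsmul_mem (b : V)
      refine isOfFinAddOrder_iff_nsmul_eq_zero.mpr ⟨n, hn, ?_⟩
      have h2 : (n : ℕ) • (QuotientAddGroup.mk b : B ⧸ A.addSubgroupOf B) =
          QuotientAddGroup.mk (n • b) :=
        (map_nsmul (QuotientAddGroup.mk' (A.addSubgroupOf B)) n b).symm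
      rw [h2, QuotientAddGroup.eq_zero_iff, AddSubgroup.mem_addSubgroupOf]
      have hco : ((n • b : B) : V) = n • (b : V) := rfl
      rw [hco, ← Nat.cast_smul_eq_nsmul ℚ]
      exact hmem
  have hfin : Finite (B ⧸ A.addSubgroupOf B) := AddCommGroup.finite_of_fg_torsion _ htor
  exact AddSubgroup.index_ne_zero_of_finite

lemma finsum_comp_addHom {Q Q' : Type*} [AddCommGroup Q] [AddCommGroup Q']
    (π : Q →+ Q') (hsurj : Function.Surjective π) [Finite π.ker]
    (h : Q' → ℚ) (hfin : (Function.support h).Finite) :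
    ∑ᶠ x, h (π x) = (Nat.card π.ker) • ∑ᶠ y, h y := by
  classical
  have hfib : ∀ y : Q', Nat.card (π ⁻¹' {y} : Set Q) = Nat.card π.ker ∧
      (π ⁻¹' {y} : Set Q).Finite := by
    intro y
    obtain ⟨x₀, hx₀⟩ := hsurj y
    have e : (π ⁻¹' {y} : Set Q) ≃ π.ker :=
      { toFun := fun x => ⟨x.1 - x₀, by
          have hx : π x.1 = y := x.2
          simp [AddMonoidHom.mem_ker, map_sub, hx, hx₀]⟩
        invFun := fun k => ⟨k.1 + x₀, by
          have hk : π k.1 = 0 := k.2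
          simp [Set.mem_preimage, map_add, hk, hx₀]⟩
        left_inv := fun x => by simp
        right_inv := fun k => by simp }
    have hfi : Finite (π ⁻¹' {y} : Set Q) := Finite.of_equiv _ e.symm
    exact ⟨Nat.card_congr e, Set.finite_coe_iff.mp hfi⟩
  have hsupp : Function.support (fun x => h (π x)) = π ⁻¹' (Function.support h) := rfl
  have hS : (π ⁻¹' (Function.support h)).Finite := by
    rw [← Set.biUnion_preimage_singleton]
    exact hfin.biUnion fun y _ => (hfib y).2
  have hstep1 : ∑ᶠ x, h (π x) = ∑ x ∈ hS.toFinset, h (π x) := by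
    refine finsum_eq_finset_sum_of_support_subset _ ?_
    rw [hsupp, Set.Finite.coe_toFinset]
  rw [hstep1, Finset.sum_comp]
  have himg : hfin.toFinset ⊆ hS.toFinset.image π := by
    intro y hy
    have hy' : h y ≠ 0 := hfin.mem_toFinset.mp hy
    obtain ⟨x₀, hx₀⟩ := hsurj y
    refine Finset.mem_image.mpr ⟨x₀, ?_, hx₀⟩
    rw [Set.Finite.mem_toFinset]
    simpa [hx₀] using hy'
  have hzero : ∀ y ∈ hS.toFinset.image π, y ∉ hfin.toFinset →
      (hS.toFinset.filter fun x => π x = y).card • h y = 0 := by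
    intro y _ hyT
    have h0 : h y = 0 := by
      by_contra hne
      exact hyT (hfin.mem_toFinset.mpr hne)
    simp [h0]
  rw [← Finset.sum_subset himg hzero]
  rw [finsum_eq_sum h hfin, Finset.smul_sum]
  refine Finset.sum_congr rfl fun y hy => ?_
  have hy' : h y ≠ 0 := hfin.mem_toFinset.mp hy
  have hcoe : ((hS.toFinset.filter fun x => π x = y : Finset Q) : Set Q) = π ⁻¹' {y} := by
    ext x
    simp only [Finset.coe_filter, Set.mem_setOf_eq, Set.mem_preimage, Set.mem_singleton_iff,
      Set.Finite.mem_toFinset, Function.mem_support]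
    constructor
    · exact fun hx => hx.2
    · intro hx
      exact ⟨by rw [hx]; exact hy', hx⟩
  have hcard : (hS.toFinset.filter fun x => π x = y).card = Nat.card π.ker := by
    rw [← (hfib y).1, Nat.card_coe_set_eq, ← hcoe, Set.ncard_coe_finset]
  rw [hcard]

/-- The Haar functional `h_V(f) = [L:M]⁻¹ ∑_{v ∈ V/M} f(v)` is independent of the choice
of full-rank period lattice `M ⊆ M'` for a locally constant, boundedly supported `f`. -/
theorem stmt8 [FiniteDimensional ℚ V] (L M M' : AddSubgroup V)
    (hL : IsFullLattice L) (hM : IsFullLattice M) (hM' : IsFullLattice M')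
    (hMM' : M ≤ M') (f : V → ℤ)
    (hper : ∀ v : V, ∀ m ∈ M', f (v + m) = f v)
    (g : V ⧸ M → ℤ) (g' : V ⧸ M' → ℤ)
    (hg : ∀ v : V, g (QuotientAddGroup.mk v) = f v)
    (hg' : ∀ v : V, g' (QuotientAddGroup.mk v) = f v)
    (hgfin : (Function.support g).Finite) (hg'fin : (Function.support g').Finite) :
    (genIndex L M)⁻¹ * ∑ᶠ x : V ⧸ M, (g x : ℚ) =
      (genIndex L M')⁻¹ * ∑ᶠ x : V ⧸ M', (g' x : ℚ) := by
  classical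
  -- the natural projection
  set π : V ⧸ M →+ V ⧸ M' :=
    QuotientAddGroup.map M M' (AddMonoidHom.id V) (fun x hx => hMM' hx) with hπdef
  have hπmk : ∀ v : V, π (QuotientAddGroup.mk v) = QuotientAddGroup.mk v := fun v => rfl
  have hsurj : Function.Surjective π := by
    intro y
    induction y using QuotientAddGroup.induction_on with
    | H v => exact ⟨QuotientAddGroup.mk v, hπmk v⟩
  -- kernel of π has cardinality `M.relIndex M'`
  set φ : M' →+ V ⧸ M := (QuotientAddGroup.mk' M).comp M'.subtype with hφdef
  have hkerφ : φ.ker = M.addSubgroupOf M' := by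
    ext x
    simp [hφdef, AddMonoidHom.mem_ker, QuotientAddGroup.eq_zero_iff,
      AddSubgroup.mem_addSubgroupOf]
  have hkerπ : π.ker = φ.range := by
    ext x
    induction x using QuotientAddGroup.induction_on with
    | H v =>
      simp only [AddMonoidHom.mem_ker, AddMonoidHom.mem_range]
      constructor
      · intro hv
        have hv' : v ∈ M' := by
          rw [hπmk v] at hv
          exact (QuotientAddGroup.eq_zero_iff v).mp hv
        exact ⟨⟨v, hv'⟩, rfl⟩
      · rintro ⟨⟨m, hm⟩, hmv⟩
        rw [← hmv]
        show π (QuotientAddGroup.mk m) = 0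
        rw [hπmk m]
        exact (QuotientAddGroup.eq_zero_iff m).mpr hm
  have hn_card : Nat.card π.ker = M.relIndex M' := by
    rw [hkerπ]
    rw [← Nat.card_congr (QuotientAddGroup.quotientKerEquivRange φ).toEquiv, hkerφ]
    exact (AddSubgroup.index_eq_card (M.addSubgroupOf M')).symm
  have hn_ne : M.relIndex M' ≠ 0 := relIndex_ne_zero_of_full hM hM'.1
  have hfinker : Finite π.ker := Nat.finite_of_card_ne_zero (by rw [hn_card]; exact hn_ne)
  -- the sum relation
  have hsupp' : (Function.support fun y : V ⧸ M' => (g' y : ℚ)).Finite := by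
    have he : (Function.support fun y : V ⧸ M' => (g' y : ℚ)) = Function.support g' := by
      ext y
      simp [Function.mem_support, Int.cast_eq_zero]
    rw [he]
    exact hg'fin
  have hsum : ∑ᶠ x : V ⧸ M, (g x : ℚ) = (M.relIndex M') • ∑ᶠ y : V ⧸ M', (g' y : ℚ) := by
    have h1 : ∀ x : V ⧸ M, (g x : ℚ) = (g' (π x) : ℚ) := by
      intro x
      induction x using QuotientAddGroup.induction_on with
      | H v => rw [hπmk, hg, hg']
    calc ∑ᶠ x : V ⧸ M, (g x : ℚ) = ∑ᶠ x : V ⧸ M, ((g' (π x) : ℚ)) := finsum_congr h1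
      _ = (Nat.card π.ker) • ∑ᶠ y : V ⧸ M', ((g' y : ℚ)) :=
          finsum_comp_addHom π hsurj _ hsupp'
      _ = _ := by rw [hn_card]
  -- genIndex in terms of relIndex
  have hgen : ∀ A B : AddSubgroup V,
      genIndex A B = (B.relIndex A : ℚ) / (A.relIndex B : ℚ) := by
    intro A B
    unfold genIndex
    rw [show ((A ⊓ B).addSubgroupOf A).index = (A ⊓ B).relIndex A from rfl,
        show ((A ⊓ B).addSubgroupOf B).index = (A ⊓ B).relIndex B from rfl,
        AddSubgroup.inf_relIndex_left, AddSubgroup.inf_relIndex_right]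
  -- nonvanishing of the relevant indices
  have ha : M.relIndex L ≠ 0 := relIndex_ne_zero_of_full hM hL.1
  have hb : L.relIndex M ≠ 0 := relIndex_ne_zero_of_full hL hM.1
  have ha' : M'.relIndex L ≠ 0 := relIndex_ne_zero_of_full hM' hL.1
  have hb' : L.relIndex M' ≠ 0 := relIndex_ne_zero_of_full hL hM'.1
  -- multiplicativity in towers
  have e1 : (L ⊓ M).relIndex (L ⊓ M') * (L ⊓ M').relIndex L = (L ⊓ M).relIndex L :=
    AddSubgroup.relIndex_mul_relIndex _ _ _ (inf_le_inf_left L hMM') inf_le_left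
  have e2 : (L ⊓ M).relIndex (L ⊓ M') * (L ⊓ M').relIndex M' = (L ⊓ M).relIndex M' :=
    AddSubgroup.relIndex_mul_relIndex _ _ _ (inf_le_inf_left L hMM') inf_le_right
  have e3 : (L ⊓ M).relIndex M * M.relIndex M' = (L ⊓ M).relIndex M' :=
    AddSubgroup.relIndex_mul_relIndex _ _ _ inf_le_right hMM'
  rw [AddSubgroup.inf_relIndex_left, AddSubgroup.inf_relIndex_left] at e1
  rw [AddSubgroup.inf_relIndex_right] at e2
  rw [AddSubgroup.inf_relIndex_right] at e3
  -- e1 : c * M'.relIndex L = M.relIndex L, e2 : c * L.relIndex M' = (L⊓M).relIndex M',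
  -- e3 : L.relIndex M * M.relIndex M' = (L⊓M).relIndex M'
  have ee2 : (L ⊓ M).relIndex (L ⊓ M') * L.relIndex M' = L.relIndex M * M.relIndex M' := by
    rw [e2, e3]
  have hnat : L.relIndex M * M.relIndex M' * M'.relIndex L =
      L.relIndex M' * M.relIndex L := by
    calc L.relIndex M * M.relIndex M' * M'.relIndex L
        = ((L ⊓ M).relIndex (L ⊓ M') * L.relIndex M') * M'.relIndex L := by rw [ee2]
      _ = L.relIndex M' * ((L ⊓ M).relIndex (L ⊓ M') * M'.relIndex L) := by ring
      _ = L.relIndex M' * M.relIndex L := by rw [e1]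
  -- put everything together
  have haQ : (M.relIndex L : ℚ) ≠ 0 := Nat.cast_ne_zero.mpr ha
  have ha'Q : (M'.relIndex L : ℚ) ≠ 0 := Nat.cast_ne_zero.mpr ha'
  have key : ((M.relIndex L : ℚ) / (L.relIndex M : ℚ))⁻¹ * (M.relIndex M' : ℚ) =
      ((M'.relIndex L : ℚ) / (L.relIndex M' : ℚ))⁻¹ := by
    rw [inv_div, inv_div, div_mul_eq_mul_div, div_eq_div_iff haQ ha'Q]
    exact_mod_cast hnat
  rw [hgen L M, hgen L M', hsum, nsmul_eq_mul, ← mul_assoc, key]
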